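/- For p ≥ 1 and 0 ≤ i ≤ p, the composite map of pointed spaces S^p ≅ Δ^p/∂Δ^p → Σ(∂Δ^p) → Σ(∂Δ^p/sk_{p−2}Δ^p) → Σ S^{p−1} ≅ S^p, where the first map is the connecting map of the cofiber sequence ∂Δ^p → Δ^p → Δ^p/∂Δ^p and the last map is projection onto the i-th wedge summand of Σ(∂Δ^p/sk_{p−2}Δ^p) ≃ ⋁_{i=0}^{p} S^p, has degree (−1)^i. -/

import Mathlib

/-!
STATEMENT 10: For `p = n + 1 ≥ 1` and `0 ≤ i ≤ p`, the composite
`S^p ≅ Δ^p/∂Δ^p → Σ(∂Δ^p) → Σ(∂Δ^p/sk_{p−2}Δ^p) → Σ S^{p−1} ≅ S^p` has degree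
`(−1)^i`, where the first map is the connecting map of the cofiber sequence
`∂Δ^p → Δ^p → Δ^p/∂Δ^p` and the last map is the projection onto the `i`-th
wedge summand.

On homology (degree means the effect on `H_p(S^p; ℤ) ≅ ℤ`), suspension
isomorphisms translate this composite into the composite
`H_{n+1}(Δ[n+1]/∂Δ[n+1]) --δ--> H_n(∂Δ[n+1]) ⟶ H_n(∂Δ[n+1]/sk_{n−1})
  --pr_i--> H_n(Δ[n]/∂Δ[n])`,
where `δ` is the connecting homomorphism of the short exact sequence of
(relative, reduced) simplicial chain complexes, the middle map is induced by
the quotient, and `pr_i` is the projection characterized against the maps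
induced by the face inclusions.  The claim is that this composite sends the
canonical generator (the class of the identity `(n+1)`-simplex) to `(−1)^i`
times the canonical generator (the class of the identity `n`-simplex).
-/

open CategoryTheory CategoryTheory.Limits SSet Simplicial Opposite
  AlgebraicTopology

/-- Simplicial chains with `ℤ`-coefficients, as a functor from simplicial sets
to chain complexes of abelian groups. -/
noncomputable def chainsFunctor : SSet ⥤ ChainComplex AddCommGrpCat ℕ :=
  (SimplicialObject.whiskering _ _).obj AddCommGrpCat.free ⋙
    alternatingFaceMapComplex AddCommGrpCat

noncomputable instance : CategoryTheory.HasForget₂ Ab Ab where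
  forget₂ := CategoryTheory.Functor.id Ab
  forget_comp := rfl

instance : (CategoryTheory.forget₂ Ab Ab).Additive :=
  show (CategoryTheory.Functor.id Ab).Additive from inferInstance

instance : (CategoryTheory.forget₂ Ab Ab).PreservesHomology :=
  show (CategoryTheory.Functor.id Ab).PreservesHomology from inferInstance

lemma abHom_map_sum {X Y : Ab} (f : X ⟶ Y) {α : Type*} (s : Finset α) (g : α → X) :
    f (∑ j ∈ s, g j) = ∑ j ∈ s, f (g j) :=
  map_sum f.hom g s

lemma abHom_map_zsmul {X Y : Ab} (f : X ⟶ Y) (a : ℤ) (x : X) : f (a • x) = a • f x :=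
  map_zsmul f.hom a x

lemma chains_map_of {X Y : SSet} (φ : X ⟶ Y) (m : ℕ) (s : X _⦋m⦌) :
    (chainsFunctor.map φ).f m (FreeAbelianGroup.of s) =
      FreeAbelianGroup.of (φ.app (op ⦋m⦌) s) :=
  FreeAbelianGroup.map_of_apply s

lemma chains_d_of (X : SSet) (m : ℕ) (s : X _⦋m + 1⦌) :
    (chainsFunctor.obj X).d (m + 1) m (FreeAbelianGroup.of s) =
      ∑ j : Fin (m + 2), (-1 : ℤ) ^ (j : ℕ) • FreeAbelianGroup.of (X.δ j s) := by
  have h : (chainsFunctor.obj X).d (m + 1) m =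
      AlternatingFaceMapComplex.objD
        (((SimplicialObject.whiskering _ _).obj AddCommGrpCat.free).obj X) m :=
    alternatingFaceMapComplex_obj_d _ _
  have key : ∀ {A B : AddCommGrpCat} (t : Finset (Fin (m + 2))) (f : Fin (m + 2) → (A ⟶ B))
      (x : A), (∑ j ∈ t, f j) x = ∑ j ∈ t, f j x := by
    intro A B t f x
    induction t using Finset.cons_induction <;> simp_all
  rw [h, AlternatingFaceMapComplex.objD]
  erw [key]
  refine Finset.sum_congr rfl fun j _ => ?_
  erw [AddMonoidHom.smul_apply]
  congr 1

set_option maxHeartbeats 2000000 in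
theorem stmt10 (n : ℕ) (i : Fin (n + 2))
    -- the (p−2)-skeleton of Δ[p] as a subcomplex of ∂Δ[p], p = n+1
    (sk : SSet) (skι : sk ⟶ ∂Δ[n + 1]) (hmono : Mono skι)
    (hsk : ∀ (m : SimplexCategoryᵒᵖ) (x : (∂Δ[n + 1] : SSet).obj m),
      (∃ y, skι.app m y = x) ↔ Set.ncard (Set.range ⇑(stdSimplex.asOrderHom x.1)) ≤ n)
    -- the face inclusions dʲ : Δ[n] ⟶ ∂Δ[n+1]
    (bd : Fin (n + 2) → (Δ[n] ⟶ (∂Δ[n + 1] : SSet)))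
    (hbd : ∀ j, bd j ≫ (∂Δ[n + 1]).ι =
      SSet.stdSimplex.map (SimplexCategory.δ j))
    -- the short exact sequence `C(∂Δ[p]) ↪ C(Δ[p]) ↠ C(Δ[p])/C(∂Δ[p])`
    (hS : (ShortComplex.mk (chainsFunctor.map ((∂Δ[n + 1]).ι))
      (cokernel.π (chainsFunctor.map ((∂Δ[n + 1]).ι)))
      (cokernel.condition _)).ShortExact)
    -- the maps `C(Δ[n])/C(∂Δ[n]) ⟶ C(∂Δ[n+1])/C(sk)` induced by the faces
    (u : Fin (n + 2) → (cokernel (chainsFunctor.map ((∂Δ[n]).ι)) ⟶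
      cokernel (chainsFunctor.map skι)))
    (hu : ∀ j, cokernel.π (chainsFunctor.map ((∂Δ[n]).ι)) ≫ u j =
      chainsFunctor.map (bd j) ≫ cokernel.π (chainsFunctor.map skι))
    -- the projection onto the `i`-th wedge summand, on homology
    (pr : (cokernel (chainsFunctor.map skι)).homology n ⟶
      (cokernel (chainsFunctor.map ((∂Δ[n]).ι))).homology n)
    (hpr : ∀ j, HomologicalComplex.homologyMap (u j) n ≫ pr =
      if j = i then 𝟙 _ else 0)
    -- the canonical generator of `H_{n+1}(Δ[n+1]/∂Δ[n+1])`: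
    -- the class of the identity (n+1)-simplex
    (z₁ : ↥((cokernel (chainsFunctor.map ((∂Δ[n + 1]).ι))).cycles
      (n + 1)))
    (hz₁ : ((cokernel (chainsFunctor.map ((∂Δ[n + 1]).ι))).iCycles
        (n + 1)) z₁ =
      ((cokernel.π (chainsFunctor.map ((∂Δ[n + 1]).ι))).f (n + 1))
        (FreeAbelianGroup.of (yonedaEquiv (𝟙 Δ[n + 1]))))
    -- the canonical generator of `H_n(Δ[n]/∂Δ[n])`:
    -- the class of the identity n-simplex
    (z₃ : ↥((cokernel (chainsFunctor.map ((∂Δ[n]).ι))).cycles n))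
    (hz₃ : ((cokernel (chainsFunctor.map ((∂Δ[n]).ι))).iCycles n) z₃ =
      ((cokernel.π (chainsFunctor.map ((∂Δ[n]).ι))).f n)
        (FreeAbelianGroup.of (yonedaEquiv (𝟙 Δ[n])))) :
    -- the composite has degree (−1)^i
    (hS.δ (n + 1) n rfl ≫
      HomologicalComplex.homologyMap (cokernel.π (chainsFunctor.map skι)) n ≫
      pr)
      (((cokernel (chainsFunctor.map ((∂Δ[n + 1]).ι))).homologyπ
        (n + 1)) z₁) =
    ((-1 : ℤ) ^ (i : ℕ)) •
      (((cokernel (chainsFunctor.map ((∂Δ[n]).ι))).homologyπ n) z₃)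
      := by
  classical
  -- the short exact sequence
  set S : CategoryTheory.ShortComplex (HomologicalComplex AddCommGrpCat (ComplexShape.down ℕ)) :=
    ShortComplex.mk (chainsFunctor.map ((∂Δ[n + 1]).ι))
      (cokernel.π (chainsFunctor.map ((∂Δ[n + 1]).ι)))
      (cokernel.condition _) with hSdef
  -- face simplices of the boundary
  set fc : Fin (n + 2) → (∂Δ[n + 1] : SSet) _⦋n⦌ :=
    fun j => (bd j).app (op ⦋n⦌) (yonedaEquiv (𝟙 Δ[n])) with hfc
  have hface : ∀ j : Fin (n + 2), ((∂Δ[n + 1]).ι).app (op ⦋n⦌) (fc j) =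
      (Δ[n + 1] : SSet).δ j (yonedaEquiv (𝟙 Δ[n + 1])) := by
    intro j
    have h := congrArg (fun (ψ : (Δ[n] : SSet) ⟶ Δ[n + 1]) =>
      ψ.app (op ⦋n⦌) (yonedaEquiv (𝟙 Δ[n]))) (hbd j)
    exact h.trans rfl
  -- elements for the connecting homomorphism computation
  set x₂ : (chainsFunctor.obj Δ[n + 1]).X (n + 1) :=
    FreeAbelianGroup.of (yonedaEquiv (𝟙 Δ[n + 1])) with hx2def
  set x₃ : S.X₃.X (n + 1) := (S.g.f (n + 1)) x₂ with hx3def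
  set x₁ : S.X₁.X n :=
    ∑ j : Fin (n + 2), (-1 : ℤ) ^ (j : ℕ) • FreeAbelianGroup.of (fc j) with hx1def
  have hz₁' : (S.X₃.iCycles (n + 1)) z₁ = x₃ := hz₁
  have hx₃ : (S.X₃.d (n + 1) n) x₃ = 0 := by
    rw [← hz₁', ← comp_apply, HomologicalComplex.iCycles_d]
    rfl
  have hx₁ : (S.f.f n) x₁ = (S.X₂.d (n + 1) n) x₂ := by
    rw [hx1def]
    erw [abHom_map_sum]
    have hd : (S.X₂.d (n + 1) n) x₂ =
        ∑ j : Fin (n + 2), (-1 : ℤ) ^ (j : ℕ) •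
          FreeAbelianGroup.of ((Δ[n + 1] : SSet).δ j (yonedaEquiv (𝟙 Δ[n + 1]))) :=
      chains_d_of _ n _
    rw [hd]
    refine Finset.sum_congr rfl fun j _ => ?_
    erw [abHom_map_zsmul]
    congr 1
    have : (S.f.f n) (FreeAbelianGroup.of (fc j)) =
        FreeAbelianGroup.of (((∂Δ[n + 1]).ι).app (op ⦋n⦌) (fc j)) :=
      chains_map_of _ n _
    rw [this, hface j]
  -- the cycles
  have hnext : (ComplexShape.down ℕ).next (n + 1) = n := by simp
  set y₃ : ↑(S.X₃.cycles (n + 1)) := S.X₃.cyclesMk x₃ n hnext hx₃ with hy3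
  have hz₁eq : z₁ = y₃ := by
    apply (Preadditive.mono_iff_injective (S.X₃.iCycles (n + 1))).1 inferInstance
    show (S.X₃.iCycles (n + 1)) z₁ = (S.X₃.iCycles (n + 1)) y₃
    rw [hz₁']
    exact (S.X₃.i_cyclesMk x₃ n hnext hx₃).symm
  have hmf := hS.mono_f
  have hdx₁ : (S.X₁.d n ((ComplexShape.down ℕ).next n)) x₁ = 0 := by
    apply (Preadditive.mono_iff_injective (S.f.f ((ComplexShape.down ℕ).next n))).1
      inferInstance
    show (S.f.f _) ((S.X₁.d n _) x₁) = (S.f.f _) 0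
    rw [← comp_apply, ← HomologicalComplex.Hom.comm, comp_apply, hx₁,
      ← comp_apply, HomologicalComplex.d_comp_d]
    erw [AddMonoidHom.zero_apply]
  set y₁ : ↑(S.X₁.cycles n) := S.X₁.cyclesMk x₁ _ rfl hdx₁ with hy1
  -- apply the concrete description of the connecting homomorphism
  have hbase := hS.δ_apply (n + 1) n rfl x₃ hx₃ x₂ rfl x₁ hx₁ _ rfl
  have hδ : (hS.δ (n + 1) n rfl)
      (((cokernel (chainsFunctor.map ((∂Δ[n + 1]).ι))).homologyπ (n + 1)) z₁) =
      (S.X₁.homologyπ n) y₁ := by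
    rw [hz₁eq]
    exact hbase
  rw [comp_apply, comp_apply, hδ]
  -- push forward to the cokernel of the skeleton inclusion
  have h2 : HomologicalComplex.homologyMap (cokernel.π (chainsFunctor.map skι)) n
      ((S.X₁.homologyπ n) y₁) =
      ((cokernel (chainsFunctor.map skι)).homologyπ n)
        ((HomologicalComplex.cyclesMap (cokernel.π (chainsFunctor.map skι)) n) y₁) := by
    rw [← comp_apply, HomologicalComplex.homologyπ_naturality, comp_apply]
  rw [h2]
  -- identify the pushed cycle with a combination of the face cycles
  have h3 : (HomologicalComplex.cyclesMap (cokernel.π (chainsFunctor.map skι)) n) y₁ =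
      ∑ j : Fin (n + 2), (-1 : ℤ) ^ (j : ℕ) •
        (HomologicalComplex.cyclesMap (u j) n) z₃ := by
    apply (Preadditive.mono_iff_injective
      ((cokernel (chainsFunctor.map skι)).iCycles n)).1 inferInstance
    show ((cokernel (chainsFunctor.map skι)).iCycles n) _ =
      ((cokernel (chainsFunctor.map skι)).iCycles n) _
    rw [← comp_apply, HomologicalComplex.cyclesMap_i, comp_apply]
    have hiy₁ : (S.X₁.iCycles n) y₁ = x₁ := S.X₁.i_cyclesMk x₁ _ rfl hdx₁
    rw [hiy₁, hx1def]
    erw [abHom_map_sum, abHom_map_sum]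
    refine Finset.sum_congr rfl fun j _ => ?_
    erw [abHom_map_zsmul, abHom_map_zsmul]
    congr 1
    have e1 : FreeAbelianGroup.of (fc j) =
        (chainsFunctor.map (bd j)).f n (FreeAbelianGroup.of (yonedaEquiv (𝟙 Δ[n]))) :=
      (chains_map_of _ n _).symm
    rw [e1]
    erw [← comp_apply ((chainsFunctor.map (bd j)).f n), ← HomologicalComplex.comp_f, ← hu j,
      HomologicalComplex.comp_f, comp_apply, ← hz₃, ← comp_apply,
      ← HomologicalComplex.cyclesMap_i, comp_apply]
  rw [h3, abHom_map_sum, abHom_map_sum]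
  have h4 : ∀ j : Fin (n + 2),
      pr (((cokernel (chainsFunctor.map skι)).homologyπ n)
        ((-1 : ℤ) ^ (j : ℕ) • (HomologicalComplex.cyclesMap (u j) n) z₃)) =
      (-1 : ℤ) ^ (j : ℕ) •
        (if j = i then
          (((cokernel (chainsFunctor.map ((∂Δ[n]).ι))).homologyπ n) z₃)
        else 0) := by
    intro j
    rw [abHom_map_zsmul, abHom_map_zsmul]
    congr 1
    have : ((cokernel (chainsFunctor.map skι)).homologyπ n)
        ((HomologicalComplex.cyclesMap (u j) n) z₃) =
        (HomologicalComplex.homologyMap (u j) n)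
          (((cokernel (chainsFunctor.map ((∂Δ[n]).ι))).homologyπ n) z₃) := by
      rw [← comp_apply, ← HomologicalComplex.homologyπ_naturality, comp_apply]
    rw [this, ← comp_apply, hpr j]
    split
    · rw [id_apply]
    · erw [AddMonoidHom.zero_apply]
  rw [Finset.sum_congr rfl fun j _ => h4 j]
  rw [Finset.sum_eq_single i]
  · rw [if_pos rfl]
  · intro b _ hb
    rw [if_neg hb, smul_zero]
  · intro h
    exact absurd (Finset.mem_univ i) h
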